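/- Let s > 0 and take characteristic numbers (a₁, a₂, a₃) = (4s, 3s, 3s). Then for every X ∈ m one has (1/2)[X, f₄X]_m + U(X, f₄X) − f₄(U(X, X)) = 0, where U is built from these characteristic numbers; that is, (f₄, g_{(4s,3s,3s)}) satisfies the Killing f-structure condition. -/

import Mathlib

namespace SO4

/-- The matrix `E_{pq}` with `1` in position `(p,q)` and `0` elsewhere (indices `0,…,3`
correspond to the paper's `1,…,4`). -/
def E (p q : Fin 4) : Matrix (Fin 4) (Fin 4) ℝ := Matrix.single p q 1

/-- The element of `m` with coordinates `(a, b₁, b₂, c₁, c₂)`. -/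
noncomputable def M (a b1 b2 c1 c2 : ℝ) : Matrix (Fin 4) (Fin 4) ℝ :=
  a • (E 0 1 - E 1 0) + b1 • (E 0 2 - E 2 0) + b2 • (E 0 3 - E 3 0) +
    c1 • (E 1 2 - E 2 1) + c2 • (E 1 3 - E 3 1)

/-- `h = span{E₃₄ − E₄₃}`, the embedded `so(2)`. -/
def hsub : Submodule ℝ (Matrix (Fin 4) (Fin 4) ℝ) := Submodule.span ℝ {E 2 3 - E 3 2}

/-- `m₁ = span{E₁₂ − E₂₁}`. -/
def m1 : Submodule ℝ (Matrix (Fin 4) (Fin 4) ℝ) := Submodule.span ℝ {E 0 1 - E 1 0}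

/-- `m₂ = span{E₁₃ − E₃₁, E₁₄ − E₄₁}`. -/
def m2 : Submodule ℝ (Matrix (Fin 4) (Fin 4) ℝ) :=
  Submodule.span ℝ {E 0 2 - E 2 0, E 0 3 - E 3 0}

/-- `m₃ = span{E₂₃ − E₃₂, E₂₄ − E₄₂}`. -/
def m3 : Submodule ℝ (Matrix (Fin 4) (Fin 4) ℝ) :=
  Submodule.span ℝ {E 1 2 - E 2 1, E 1 3 - E 3 1}

/-- `m = m₁ ⊕ m₂ ⊕ m₃`. -/
def msum : Submodule ℝ (Matrix (Fin 4) (Fin 4) ℝ) := m1 ⊔ m2 ⊔ m3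

/-- The projection of `X ∈ so(4)` onto `m` along `h` (read off the coordinates
`a = X₁₂, b₁ = X₁₃, b₂ = X₁₄, c₁ = X₂₃, c₂ = X₂₄`). -/
noncomputable def projm (X : Matrix (Fin 4) (Fin 4) ℝ) : Matrix (Fin 4) (Fin 4) ℝ :=
  M (X 0 1) (X 0 2) (X 0 3) (X 1 2) (X 1 3)

/-- The `m₁`-component of `X ∈ m`. -/
noncomputable def P1 (X : Matrix (Fin 4) (Fin 4) ℝ) : Matrix (Fin 4) (Fin 4) ℝ :=
  M (X 0 1) 0 0 0 0

/-- The `m₂`-component of `X ∈ m`. -/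
noncomputable def P2 (X : Matrix (Fin 4) (Fin 4) ℝ) : Matrix (Fin 4) (Fin 4) ℝ :=
  M 0 (X 0 2) (X 0 3) 0 0

/-- The `m₃`-component of `X ∈ m`. -/
noncomputable def P3 (X : Matrix (Fin 4) (Fin 4) ℝ) : Matrix (Fin 4) (Fin 4) ℝ :=
  M 0 0 0 (X 1 2) (X 1 3)

/-- `f₁(a,b₁,b₂,c₁,c₂) = (0, b₂, −b₁, 0, 0)`, acting on `m`. -/
noncomputable def f1 (X : Matrix (Fin 4) (Fin 4) ℝ) : Matrix (Fin 4) (Fin 4) ℝ :=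
  M 0 (X 0 3) (-(X 0 2)) 0 0

/-- `f₂(a,b₁,b₂,c₁,c₂) = (0, 0, 0, c₂, −c₁)`, acting on `m`. -/
noncomputable def f2 (X : Matrix (Fin 4) (Fin 4) ℝ) : Matrix (Fin 4) (Fin 4) ℝ :=
  M 0 0 0 (X 1 3) (-(X 1 2))

/-- `f₃(a,b₁,b₂,c₁,c₂) = (0, b₂, −b₁, c₂, −c₁)`, acting on `m`. -/
noncomputable def f3 (X : Matrix (Fin 4) (Fin 4) ℝ) : Matrix (Fin 4) (Fin 4) ℝ :=
  M 0 (X 0 3) (-(X 0 2)) (X 1 3) (-(X 1 2))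

/-- `f₄(a,b₁,b₂,c₁,c₂) = (0, b₂, −b₁, −c₂, c₁)`, acting on `m`. -/
noncomputable def f4 (X : Matrix (Fin 4) (Fin 4) ℝ) : Matrix (Fin 4) (Fin 4) ℝ :=
  M 0 (X 0 3) (-(X 0 2)) (-(X 1 3)) (X 1 2)

end SO4

namespace SO4

/-- The symmetric bilinear map `U` built from the characteristic numbers `(a₁,a₂,a₃)`:
`U(X,Y) = ((a₃−a₂)/(2a₁))([X₂,Y₃]+[Y₂,X₃]) + ((a₃−a₁)/(2a₂))([X₁,Y₃]+[Y₁,X₃])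
        + ((a₂−a₁)/(2a₃))([X₁,Y₂]+[Y₁,X₂])`. -/
noncomputable def U (a1 a2 a3 : ℝ) (X Y : Matrix (Fin 4) (Fin 4) ℝ) :
    Matrix (Fin 4) (Fin 4) ℝ :=
  ((a3 - a2) / (2 * a1)) • (⁅P2 X, P3 Y⁆ + ⁅P2 Y, P3 X⁆) +
    ((a3 - a1) / (2 * a2)) • (⁅P1 X, P3 Y⁆ + ⁅P1 Y, P3 X⁆) +
    ((a2 - a1) / (2 * a3)) • (⁅P1 X, P2 Y⁆ + ⁅P1 Y, P2 X⁆)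

end SO4

namespace SO4

lemma key (a b1 b2 c1 c2 : ℝ) : M a b1 b2 c1 c2 =
    !![0, a, b1, b2; -a, 0, c1, c2; -b1, -c1, 0, 0; -b2, -c2, 0, 0] := by
  ext i j
  fin_cases i <;> fin_cases j <;>
    simp [M, E, Matrix.single, Matrix.vecHead, Matrix.vecTail]

lemma Mcongr {a b c d e a' b' c' d' e' : ℝ} (h1 : a = a') (h2 : b = b') (h3 : c = c')
    (h4 : d = d') (h5 : e = e') : M a b c d e = M a' b' c' d' e' := by
  rw [h1, h2, h3, h4, h5]

lemma Msmul (r a b c d e : ℝ) : r • M a b c d e = M (r*a) (r*b) (r*c) (r*d) (r*e) := by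
  simp only [M]; module

lemma Madd (a b c d e a' b' c' d' e' : ℝ) :
    M a b c d e + M a' b' c' d' e' = M (a+a') (b+b') (c+c') (d+d') (e+e') := by
  simp only [M]; module

lemma Msub (a b c d e a' b' c' d' e' : ℝ) :
    M a b c d e - M a' b' c' d' e' = M (a-a') (b-b') (c-c') (d-d') (e-e') := by
  simp only [M]; module

lemma Mzero : M 0 0 0 0 0 = 0 := by simp [M]

lemma hf4 (v w x y z : ℝ) : f4 (M v w x y z) = M 0 x (-w) (-z) y := by
  rw [f4, key v w x y z]
  exact Mcongr rfl (by simp) (by simp) (by simp) (by simp)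

lemma hP1 (v w x y z : ℝ) : P1 (M v w x y z) = M v 0 0 0 0 := by
  rw [P1, key v w x y z]
  exact Mcongr (by norm_num) rfl rfl rfl rfl

lemma hP2 (v w x y z : ℝ) : P2 (M v w x y z) = M 0 w x 0 0 := by
  rw [P2, key v w x y z]
  exact Mcongr rfl (by simp) (by simp) rfl rfl

lemma hP3 (v w x y z : ℝ) : P3 (M v w x y z) = M 0 0 0 y z := by
  rw [P3, key v w x y z]
  exact Mcongr rfl rfl rfl (by simp) (by simp)

lemma L13 (v y z : ℝ) : ⁅M v 0 0 0 0, M (0:ℝ) 0 0 y z⁆ = M 0 (v*y) (v*z) 0 0 := by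
  rw [Ring.lie_def, key v 0 0 0 0, key 0 0 0 y z, key 0 (v*y) (v*z) 0 0]
  ext i j
  fin_cases i <;> fin_cases j <;>
    · simp [Matrix.mul_apply, Fin.sum_univ_four]
      try norm_num [Matrix.vecHead, Matrix.vecTail]
      try ring

lemma L12 (v w x : ℝ) : ⁅M v 0 0 0 0, M (0:ℝ) w x 0 0⁆ = M 0 0 0 (-(v*w)) (-(v*x)) := by
  rw [Ring.lie_def, key v 0 0 0 0, key 0 w x 0 0, key 0 0 0 (-(v*w)) (-(v*x))]
  ext i j
  fin_cases i <;> fin_cases j <;>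
    · simp [Matrix.mul_apply, Fin.sum_univ_four]
      try norm_num [Matrix.vecHead, Matrix.vecTail]
      try ring

lemma L23 (w x y z : ℝ) : ⁅M (0:ℝ) w x 0 0, M (0:ℝ) 0 0 y z⁆ = M (-(w*y)-x*z) 0 0 0 0 := by
  rw [Ring.lie_def, key 0 w x 0 0, key 0 0 0 y z, key (-(w*y)-x*z) 0 0 0 0]
  ext i j
  fin_cases i <;> fin_cases j <;>
    · simp [Matrix.mul_apply, Fin.sum_univ_four]
      try norm_num [Matrix.vecHead, Matrix.vecTail]
      try ring

lemma hU (s v w x y z v' w' x' y' z' : ℝ) (hs : s ≠ 0) :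
    U (4*s) (3*s) (3*s) (M v w x y z) (M v' w' x' y' z') =
      M 0 (-(v*y')/6 - (v'*y)/6) (-(v*z')/6 - (v'*z)/6) ((v*w')/6 + (v'*w)/6)
        ((v*x')/6 + (v'*x)/6) := by
  rw [U, hP1, hP2, hP3, hP1, hP2, hP3, L23, L23 w' x' y z, L13, L13 v' y z,
    L12, L12 v' w x, Madd, Madd, Madd, Msmul, Msmul, Msmul, Madd, Madd]
  exact Mcongr (by field_simp; ring) (by field_simp; ring) (by field_simp; ring)
    (by field_simp; ring) (by field_simp; ring)

lemma e4 (a b1 b2 c1 c2 : ℝ) : projm ⁅M a b1 b2 c1 c2, M 0 b2 (-b1) (-c2) c1⁆ =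
    M 0 (-(a * c2)) (a * c1) (-(a * b2)) (a * b1) := by
  rw [Ring.lie_def, projm, key a b1 b2 c1 c2, key 0 b2 (-b1) (-c2) c1]
  exact Mcongr (by simp [Matrix.mul_apply, Fin.sum_univ_four]; try ring)
    (by simp [Matrix.mul_apply, Fin.sum_univ_four]; try ring)
    (by simp [Matrix.mul_apply, Fin.sum_univ_four]; try ring)
    (by simp [Matrix.mul_apply, Fin.sum_univ_four]; try ring)
    (by simp [Matrix.mul_apply, Fin.sum_univ_four]; try ring)

lemma mem_msum_form : ∀ X ∈ msum, ∃ a b1 b2 c1 c2 : ℝ, X = M a b1 b2 c1 c2 := by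
  intro X hX
  have h : msum ≤ Submodule.span ℝ
      {E 0 1 - E 1 0, E 0 2 - E 2 0, E 0 3 - E 3 0, E 1 2 - E 2 1, E 1 3 - E 3 1} := by
    rw [msum]
    refine sup_le (sup_le (Submodule.span_le.2 ?_) (Submodule.span_le.2 ?_))
      (Submodule.span_le.2 ?_)
    · rintro x rfl; exact Submodule.subset_span (by simp)
    · rintro x (rfl | rfl) <;> exact Submodule.subset_span (by simp)
    · rintro x (rfl | rfl) <;> exact Submodule.subset_span (by simp)
  have hX2 := h hX
  clear hX
  induction hX2 using Submodule.span_induction with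
  | mem x hx =>
    simp only [Set.mem_insert_iff, Set.mem_singleton_iff] at hx
    rcases hx with rfl|rfl|rfl|rfl|rfl
    · exact ⟨1,0,0,0,0, by simp [M]⟩
    · exact ⟨0,1,0,0,0, by simp [M]⟩
    · exact ⟨0,0,1,0,0, by simp [M]⟩
    · exact ⟨0,0,0,1,0, by simp [M]⟩
    · exact ⟨0,0,0,0,1, by simp [M]⟩
  | zero => exact ⟨0,0,0,0,0, by simp [M]⟩
  | add x y _ _ hx hy =>
    obtain ⟨a,b1,b2,c1,c2,rfl⟩ := hx
    obtain ⟨a',b1',b2',c1',c2',rfl⟩ := hy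
    exact ⟨a+a',b1+b1',b2+b2',c1+c1',c2+c2', by simp only [M]; module⟩
  | smul r x _ hx =>
    obtain ⟨a,b1,b2,c1,c2,rfl⟩ := hx
    exact ⟨r*a,r*b1,r*b2,r*c1,r*c2, by simp only [M]; module⟩

end SO4
open SO4 in
/-- for `s > 0` and characteristic numbers `(a₁,a₂,a₃) = (4s,3s,3s)`, every
`X ∈ m` satisfies `(1/2)[X, f₄X]_m + U(X, f₄X) − f₄(U(X, X)) = 0`; that is,
`(f₄, g_{(4s,3s,3s)})` satisfies the Killing `f`-structure condition. -/
theorem statement13 :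
    ∀ s : ℝ, 0 < s → ∀ X ∈ msum,
      (1 / 2 : ℝ) • projm ⁅X, f4 X⁆ + U (4 * s) (3 * s) (3 * s) X (f4 X)
        - f4 (U (4 * s) (3 * s) (3 * s) X X) = 0 := by
  intro s hs X hX
  obtain ⟨a, b1, b2, c1, c2, rfl⟩ := mem_msum_form X hX
  have hs' : s ≠ 0 := ne_of_gt hs
  rw [hf4 a b1 b2 c1 c2, hU s a b1 b2 c1 c2 0 b2 (-b1) (-c2) c1 hs',
    hU s a b1 b2 c1 c2 a b1 b2 c1 c2 hs', hf4, e4, Msmul, Madd, Msub, ← Mzero]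
  exact Mcongr (by ring) (by ring) (by ring) (by ring) (by ring)
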